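/- Let f(x) = ½xᵀHx + xᵀv + c with H symmetric, and let C = H² + vvᵀ. If w is an eigenvector of C with eigenvalue 0, then Hw = 0 and vᵀw = 0; consequently f(x + sw) = f(x) for all x ∈ ℝ^m and all s ∈ ℝ, i.e., f is constant along directions in the null space of C. -/

import Mathlib

open Matrix

/-- Null-space directions of `C = H² + vvᵀ` are invariant directions of the quadratic model:
if `C w = 0` then `Hw = 0`, `vᵀw = 0`, and `f(x + s w) = f(x)` for all `x`, `s`. -/
theorem stmt_15 (m : ℕ) (H : Matrix (Fin m) (Fin m) ℝ) (hH : H.IsSymm)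
    (v : Fin m → ℝ) (c : ℝ) (f : (Fin m → ℝ) → ℝ)
    (hf : ∀ x, f x = (1/2) * (x ⬝ᵥ H.mulVec x) + x ⬝ᵥ v + c)
    (w : Fin m → ℝ) (hw : w ≠ 0)
    (hCw : (H * H + Matrix.vecMulVec v v).mulVec w = 0) :
    H.mulVec w = 0 ∧ v ⬝ᵥ w = 0 ∧ ∀ (x : Fin m → ℝ) (s : ℝ), f (x + s • w) = f x := by
  have h0 : w ⬝ᵥ ((H * H + Matrix.vecMulVec v v).mulVec w) = 0 := by
    rw [hCw]; simp
  have hvm : H.vecMul w = H.mulVec w := by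
    nth_rewrite 1 [← hH.eq]
    exact vecMul_transpose H w
  have hsplit : (H.mulVec w) ⬝ᵥ (H.mulVec w) + (v ⬝ᵥ w) * (v ⬝ᵥ w) = 0 := by
    have h1 : w ⬝ᵥ ((H * H).mulVec w) = (H.mulVec w) ⬝ᵥ (H.mulVec w) := by
      rw [← mulVec_mulVec, dotProduct_mulVec, hvm]
    have h2 : w ⬝ᵥ ((Matrix.vecMulVec v v).mulVec w) = (v ⬝ᵥ w) * (v ⬝ᵥ w) := by
      simp [dotProduct, vecMulVec_apply, mulVec, Finset.mul_sum, Finset.sum_mul]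
      rw [Finset.sum_comm]
      congr 1; ext i; congr 1; ext j; ring
    rw [add_mulVec, dotProduct_add, h1, h2] at h0
    exact h0
  have hnn : 0 ≤ (H.mulVec w) ⬝ᵥ (H.mulVec w) :=
    Finset.sum_nonneg fun i _ => mul_self_nonneg _
  have hHw : H.mulVec w = 0 := by
    have hq : (H.mulVec w) ⬝ᵥ (H.mulVec w) = 0 := by nlinarith [sq_nonneg (v ⬝ᵥ w)]
    exact dotProduct_self_eq_zero.mp hq
  have hvw : v ⬝ᵥ w = 0 := by nlinarith [sq_nonneg (v ⬝ᵥ w)]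
  refine ⟨hHw, hvw, fun x s => ?_⟩
  have hwv : w ⬝ᵥ v = 0 := by rwa [dotProduct_comm]
  rw [hf, hf, mulVec_add, mulVec_smul, hHw]
  simp [dotProduct_add, add_dotProduct, smul_dotProduct, dotProduct_smul, hwv, hvw,
    dotProduct_mulVec, hvm, hHw, add_vecMul, vecMul_smul, hvm]
  rw [show (s • w) ᵥ* H = s • (w ᵥ* H) from by
    ext j; simp [vecMul, dotProduct, Finset.mul_sum, mul_assoc], hvm, hHw]
  simp
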